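/- For a simple graph G on a countably infinite vertex set, the following are equivalent: (1) G is MI-homogeneous; (2) G is MA-homogeneous; (3) G is a complete graph or G has no edges. -/

import Mathlib

open Classical in
/-- Extend `f` by mapping `a` to `b`. -/
noncomputable def extendBy {V : Type} (f : V → V) (a b : V) : V → V :=
  Function.update f a b

section Defs

variable {V : Type}

/-- `f` is a graph homomorphism on the finite induced subgraph on `A`. -/
def IsHomOn (G : SimpleGraph V) (A : Finset V) (f : V → V) : Prop :=
  ∀ ⦃u v : V⦄, u ∈ A → v ∈ A → G.Adj u v → G.Adj (f u) (f v)

/-- `f` is an injective graph homomorphism (monomorphism) on `A`. -/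
def IsMonOn (G : SimpleGraph V) (A : Finset V) (f : V → V) : Prop :=
  IsHomOn G A f ∧ Set.InjOn f (↑A : Set V)

/-- `f` is an isomorphism of the induced subgraph on `A` onto its image. -/
def IsIsoOn (G : SimpleGraph V) (A : Finset V) (f : V → V) : Prop :=
  Set.InjOn f (↑A : Set V) ∧
    ∀ ⦃u v : V⦄, u ∈ A → v ∈ A → (G.Adj u v ↔ G.Adj (f u) (f v))

/-- `F` is a graph homomorphism `G → G`. -/
def IsHomEndo (G : SimpleGraph V) (F : V → V) : Prop :=
  ∀ ⦃u v : V⦄, G.Adj u v → G.Adj (F u) (F v)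

/-- `F` is an injective graph homomorphism `G → G`. -/
def IsMonEndo (G : SimpleGraph V) (F : V → V) : Prop :=
  IsHomEndo G F ∧ Function.Injective F

/-- `F` is a self-embedding of `G`. -/
def IsEmbEndo (G : SimpleGraph V) (F : V → V) : Prop :=
  Function.Injective F ∧ ∀ u v : V, G.Adj u v ↔ G.Adj (F u) (F v)

/-- `F` is a surjective graph homomorphism `G → G`. -/
def IsEpiEndo (G : SimpleGraph V) (F : V → V) : Prop :=
  IsHomEndo G F ∧ Function.Surjective F

/-- `F` is a bijective graph homomorphism `G → G`. -/
def IsBiEndo (G : SimpleGraph V) (F : V → V) : Prop :=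
  IsHomEndo G F ∧ Function.Bijective F

/-- `F` is an automorphism of `G`. -/
def IsAutEndo (G : SimpleGraph V) (F : V → V) : Prop :=
  Function.Bijective F ∧ ∀ u v : V, G.Adj u v ↔ G.Adj (F u) (F v)

def IsHHHom (G : SimpleGraph V) : Prop :=
  ∀ (A : Finset V) (f : V → V), IsHomOn G A f →
    ∃ F : V → V, IsHomEndo G F ∧ ∀ a ∈ A, F a = f a

def IsHMHom (G : SimpleGraph V) : Prop :=
  ∀ (A : Finset V) (f : V → V), IsHomOn G A f →
    ∃ F : V → V, IsMonEndo G F ∧ ∀ a ∈ A, F a = f a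

def IsHIHom (G : SimpleGraph V) : Prop :=
  ∀ (A : Finset V) (f : V → V), IsHomOn G A f →
    ∃ F : V → V, IsEmbEndo G F ∧ ∀ a ∈ A, F a = f a

def IsHEHom (G : SimpleGraph V) : Prop :=
  ∀ (A : Finset V) (f : V → V), IsHomOn G A f →
    ∃ F : V → V, IsEpiEndo G F ∧ ∀ a ∈ A, F a = f a

def IsHBHom (G : SimpleGraph V) : Prop :=
  ∀ (A : Finset V) (f : V → V), IsHomOn G A f →
    ∃ F : V → V, IsBiEndo G F ∧ ∀ a ∈ A, F a = f a

def IsHAHom (G : SimpleGraph V) : Prop :=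
  ∀ (A : Finset V) (f : V → V), IsHomOn G A f →
    ∃ F : V → V, IsAutEndo G F ∧ ∀ a ∈ A, F a = f a

def IsMHHom (G : SimpleGraph V) : Prop :=
  ∀ (A : Finset V) (f : V → V), IsMonOn G A f →
    ∃ F : V → V, IsHomEndo G F ∧ ∀ a ∈ A, F a = f a

def IsMMHom (G : SimpleGraph V) : Prop :=
  ∀ (A : Finset V) (f : V → V), IsMonOn G A f →
    ∃ F : V → V, IsMonEndo G F ∧ ∀ a ∈ A, F a = f a

def IsMIHom (G : SimpleGraph V) : Prop :=
  ∀ (A : Finset V) (f : V → V), IsMonOn G A f →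
    ∃ F : V → V, IsEmbEndo G F ∧ ∀ a ∈ A, F a = f a

def IsMEHom (G : SimpleGraph V) : Prop :=
  ∀ (A : Finset V) (f : V → V), IsMonOn G A f →
    ∃ F : V → V, IsEpiEndo G F ∧ ∀ a ∈ A, F a = f a

def IsMBHom (G : SimpleGraph V) : Prop :=
  ∀ (A : Finset V) (f : V → V), IsMonOn G A f →
    ∃ F : V → V, IsBiEndo G F ∧ ∀ a ∈ A, F a = f a

def IsMAHom (G : SimpleGraph V) : Prop :=
  ∀ (A : Finset V) (f : V → V), IsMonOn G A f →
    ∃ F : V → V, IsAutEndo G F ∧ ∀ a ∈ A, F a = f a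

def IsIHHom (G : SimpleGraph V) : Prop :=
  ∀ (A : Finset V) (f : V → V), IsIsoOn G A f →
    ∃ F : V → V, IsHomEndo G F ∧ ∀ a ∈ A, F a = f a

def IsIEHom (G : SimpleGraph V) : Prop :=
  ∀ (A : Finset V) (f : V → V), IsIsoOn G A f →
    ∃ F : V → V, IsEpiEndo G F ∧ ∀ a ∈ A, F a = f a

/-- A cone over a finite set `S`: a vertex outside `S` adjacent to every vertex of `S`. -/
def IsCone (G : SimpleGraph V) (S : Finset V) (v : V) : Prop :=
  v ∉ S ∧ ∀ s ∈ S, G.Adj v s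

/-- A co-cone over a finite set `S`: a vertex outside `S` adjacent to no vertex of `S`. -/
def IsCoCone (G : SimpleGraph V) (S : Finset V) (v : V) : Prop :=
  v ∉ S ∧ ∀ s ∈ S, ¬ G.Adj v s

def HasCoCone (G : SimpleGraph V) (S : Finset V) : Prop :=
  ∃ v : V, IsCoCone G S v

open Classical in
/-- Property (†): every finite surjective homomorphism, and vertex `b` outside its image,
admits a preimage `a` outside the domain such that `f ∪ {(a,b)}` is a homomorphism. -/
def PropDagger (G : SimpleGraph V) : Prop :=
  ∀ (A : Finset V) (f : V → V), IsHomOn G A f →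
    ∀ b : V, b ∉ f '' (↑A : Set V) →
      ∃ a : V, a ∉ A ∧ IsHomOn G (insert a A) (extendBy f a b)

open Classical in
/-- Property (*): every finite surjective monomorphism, and vertex `c` outside its domain,
admits an image `d` outside the codomain such that `f ∪ {(c,d)}` is a homomorphism. -/
def PropStar (G : SimpleGraph V) : Prop :=
  ∀ (A : Finset V) (f : V → V), IsMonOn G A f →
    ∀ c : V, c ∉ A →
      ∃ d : V, d ∉ f '' (↑A : Set V) ∧ IsHomOn G (insert c A) (extendBy f c d)

/-- The disjoint union of `ι`-many complete graphs, each with vertex set `κ`. -/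
def cliqueSum (ι κ : Type) : SimpleGraph (ι × κ) :=
  SimpleGraph.fromRel (fun p q => p.1 = q.1)

end Defs

open Classical in
lemma exists_bij_extend {V : Type} [Countable V] [Infinite V] (A : Finset V) (f : V → V)
    (hf : Set.InjOn f (↑A : Set V)) :
    ∃ F : V → V, Function.Bijective F ∧ ∀ a ∈ A, F a = f a := by
  classical
  set s : Set V := ↑A with hs
  set t : Set V := f '' s with ht
  have hsfin : s.Finite := A.finite_toSet
  have htfin : t.Finite := hsfin.image f
  have hsc : (sᶜ : Set V).Infinite := hsfin.infinite_compl
  have htc : (tᶜ : Set V).Infinite := htfin.infinite_compl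
  haveI : Infinite ↥(sᶜ) := hsc.to_subtype
  haveI : Infinite ↥(tᶜ) := htc.to_subtype
  obtain ⟨d1⟩ := nonempty_denumerable ↥(sᶜ)
  obtain ⟨d2⟩ := nonempty_denumerable ↥(tᶜ)
  haveI := d1; haveI := d2
  let e₂ : ↥(sᶜ) ≃ ↥(tᶜ) := (Denumerable.eqv ↥(sᶜ)).trans (Denumerable.eqv ↥(tᶜ)).symm
  let e₁ : ↥s ≃ ↥t := Equiv.Set.imageOfInjOn f s hf
  let E : V ≃ V := (Equiv.Set.sumCompl s).symm.trans ((e₁.sumCongr e₂).trans (Equiv.Set.sumCompl t))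
  refine ⟨E, E.bijective, fun a ha => ?_⟩
  have hmem : a ∈ s := ha
  show E a = f a
  simp only [E, Equiv.trans_apply, Equiv.Set.sumCompl_symm_apply_of_mem hmem,
    Equiv.sumCongr_apply, Sum.map_inl]
  simp [Equiv.Set.sumCompl, e₁, Equiv.Set.imageOfInjOn]
  rfl

/-- Dichotomy implies MA-homogeneity. -/
lemma dich_imp_MA {V : Type} [Countable V] [Infinite V] (G : SimpleGraph V)
    (h : (∀ u v : V, u ≠ v → G.Adj u v) ∨ (∀ u v : V, ¬ G.Adj u v)) : IsMAHom G := by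
  intro A f hf
  obtain ⟨F, hFbij, hFa⟩ := exists_bij_extend A f hf.2
  refine ⟨F, ⟨hFbij, fun u v => ?_⟩, hFa⟩
  rcases h with h | h
  · constructor
    · intro huv; exact h _ _ (fun he => huv.ne (hFbij.1 he))
    · intro huv; exact h _ _ (fun he => huv.ne (congrArg F he))
  · constructor
    · intro huv; exact absurd huv (h u v)
    · intro huv; exact absurd huv (h _ _)

/-- MI (or MA) implies dichotomy, given an embedding-producing extension. -/
lemma emb_imp_dich {V : Type} (G : SimpleGraph V)
    (hG : ∀ (A : Finset V) (f : V → V), IsMonOn G A f →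
      ∃ F : V → V, (∀ u v : V, G.Adj u v ↔ G.Adj (F u) (F v)) ∧ ∀ a ∈ A, F a = f a) :
    (∀ u v : V, u ≠ v → G.Adj u v) ∨ (∀ u v : V, ¬ G.Adj u v) := by
  by_contra hcon
  push_neg at hcon
  obtain ⟨⟨u, v, huv, hnadj⟩, x, y, hadj⟩ := hcon
  classical
  set f : V → V := fun w => if w = u then x else y with hfdef
  have hfu : f u = x := by simp [f]
  have hfv : f v = y := by simp [f, huv.symm, Ne.symm huv]
  have hxy : x ≠ y := hadj.ne
  have hmon : IsMonOn G ({u, v} : Finset V) f := by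
    constructor
    · intro a b ha hb hab
      simp only [Finset.mem_insert, Finset.mem_singleton] at ha hb
      rcases ha with rfl | rfl <;> rcases hb with rfl | rfl <;>
        first
        | exact absurd hab (G.irrefl)
        | exact absurd hab hnadj
        | exact absurd hab.symm hnadj
    · intro a ha b hb hab
      simp only [Finset.coe_insert, Set.mem_insert_iff, Finset.coe_singleton,
        Set.mem_singleton_iff] at ha hb
      rcases ha with rfl | rfl <;> rcases hb with rfl | rfl
      · rfl
      · rw [hfu, hfv] at hab; exact absurd hab hxy
      · rw [hfu, hfv] at hab; exact absurd hab.symm hxy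
      · rfl
  obtain ⟨F, hFiff, hFa⟩ := hG _ f hmon
  have h1 : F u = x := by rw [hFa u (by simp), hfu]
  have h2 : F v = y := by rw [hFa v (by simp), hfv]
  exact hnadj ((hFiff u v).mpr (by rw [h1, h2]; exact hadj))

/-- For a countably infinite graph, MI- and MA-homogeneity are each equivalent
to being complete or edgeless. -/
theorem stmt_2 {V : Type} [Countable V] [Infinite V] (G : SimpleGraph V) :
    (IsMIHom G ↔ ((∀ u v : V, u ≠ v → G.Adj u v) ∨ (∀ u v : V, ¬ G.Adj u v))) ∧
    (IsMAHom G ↔ ((∀ u v : V, u ≠ v → G.Adj u v) ∨ (∀ u v : V, ¬ G.Adj u v))) := by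
  have hMA : IsMAHom G → IsMIHom G := by
    intro h A f hf
    obtain ⟨F, ⟨hbij, hiff⟩, ha⟩ := h A f hf
    exact ⟨F, ⟨hbij.1, hiff⟩, ha⟩
  constructor
  · constructor
    · intro h
      refine emb_imp_dich G (fun A f hf => ?_)
      obtain ⟨F, ⟨_, hiff⟩, ha⟩ := h A f hf
      exact ⟨F, hiff, ha⟩
    · intro h; exact hMA (dich_imp_MA G h)
  · constructor
    · intro h
      refine emb_imp_dich G (fun A f hf => ?_)
      obtain ⟨F, ⟨_, hiff⟩, ha⟩ := h A f hf
      exact ⟨F, hiff, ha⟩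
    · exact dich_imp_MA G
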